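/- Let p, q be nonnegative integers with p ≥ 1 and fix a nonnegative integer j. Then the sequence i ↦ A_{p,q}(i,j)/A_{p-1,q}(i,j) (a sequence of real numbers) is nonincreasing in i and converges to (p+q+j+1)/(p+q+1) as i → ∞. -/

import Mathlib

open Finset

/-- The generalized Eulerian number `eulerA p q i j` counts the paths in the Euler graph
from `(p, q)` to `(p + i, q + j)`.  It is defined by the initial conditions
`eulerA p q i 0 = (q+1)^i`, `eulerA p q 0 j = (p+1)^j` and the recurrence
`eulerA p q i j = (j+q+1) * eulerA p q (i-1) j + (i+p+1) * eulerA p q i (j-1)`. -/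
def eulerA (p q : ℕ) : ℕ → ℕ → ℕ
  | i, 0 => (q + 1) ^ i
  | 0, j + 1 => (p + 1) ^ (j + 1)
  | i + 1, j + 1 =>
      (j + 1 + q + 1) * eulerA p q i (j + 1) + (i + 1 + p + 1) * eulerA p q (i + 1) j

lemma eulerA_j0 (p q i : ℕ) : eulerA p q i 0 = (q+1)^i := by simp [eulerA]
lemma eulerA_i0 (p q j : ℕ) : eulerA p q 0 (j+1) = (p+1)^(j+1) := by simp [eulerA]
lemma eulerA_rec (p q i j : ℕ) : eulerA p q (i+1) (j+1)
    = (j + 1 + q + 1) * eulerA p q i (j + 1) + (i + 1 + p + 1) * eulerA p q (i + 1) j := by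
  simp [eulerA]

lemma eulerA_pos (p q : ℕ) : ∀ i j, 0 < eulerA p q i j := by
  intro i j
  induction j generalizing i with
  | zero => rw [eulerA_j0]; positivity
  | succ j ihj =>
    induction i with
    | zero => rw [eulerA_i0]; positivity
    | succ i ihi =>
      rw [eulerA_rec]
      have h1 := ihj (i+1)
      positivity

/-! ### Generic alternating-sum Pascal lemma -/

lemma alt_sum_pascal (h : ℕ → ℤ) (N j : ℕ) :
    ∑ m ∈ range (j+2), (-1:ℤ)^m * ((N+1).choose m : ℤ) * h (j+1-m)
      = ∑ m ∈ range (j+2), (-1:ℤ)^m * (N.choose m : ℤ) * h (j+1-m)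
        - ∑ m ∈ range (j+1), (-1:ℤ)^m * (N.choose m : ℤ) * h (j-m) := by
  rw [Finset.sum_range_succ' (fun m => (-1:ℤ)^m * ((N+1).choose m : ℤ) * h (j+1-m)) (j+1)]
  rw [Finset.sum_range_succ' (fun m => (-1:ℤ)^m * (N.choose m : ℤ) * h (j+1-m)) (j+1)]
  have key : ∀ m ∈ range (j+1),
      (-1:ℤ)^(m+1) * ((N+1).choose (m+1) : ℤ) * h (j+1-(m+1))
        = ((-1:ℤ)^(m+1) * (N.choose (m+1) : ℤ) * h (j+1-(m+1)))
          - ((-1:ℤ)^m * (N.choose m : ℤ) * h (j-m)) := by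
    intro m hm
    have : j+1-(m+1) = j - m := by omega
    rw [this, Nat.choose_succ_succ N m]
    push_cast
    ring
  rw [Finset.sum_congr rfl key, Finset.sum_sub_distrib]
  simp only [Nat.choose_zero_right, Nat.cast_one]
  ring

/-! ### The closed form sum -/

def gg (p q e k : ℕ) : ℤ := ((p+q+k+1).choose k : ℤ) * ((k + q + 1 : ℕ) : ℤ)^e

def SH (p q N e j : ℕ) : ℤ :=
  ∑ m ∈ range (j+1), (-1:ℤ)^m * (N.choose m : ℤ) * gg p q e (j-m)

lemma SH_N_succ (p q N e j : ℕ) :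
    SH p q (N+1) e (j+1) = SH p q N e (j+1) - SH p q N e j := by
  unfold SH
  exact alt_sum_pascal (gg p q e) N j

lemma SH_step (p q N e j : ℕ) :
    SH p q (N+1) (e+1) (j+1)
      = ((j:ℤ)+q+2) * SH p q (N+1) e (j+1) + ((N:ℤ)+1) * SH p q N e j := by
  have key : ∀ m ∈ range (j+2),
      (-1:ℤ)^m * ((N+1).choose m : ℤ) * gg p q (e+1) (j+1-m)
        = ((j:ℤ)+q+2) * ((-1:ℤ)^m * ((N+1).choose m : ℤ) * gg p q e (j+1-m))
          - ((m:ℤ) * ((N+1).choose m : ℤ)) * ((-1:ℤ)^m * gg p q e (j+1-m)) := by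
    intro m hm
    have hm' : m ≤ j + 1 := by
      have := Finset.mem_range.mp hm; omega
    unfold gg
    have hcast : (((j+1-m) + q + 1 : ℕ) : ℤ) = (j:ℤ) + q + 2 - m := by
      have h1 : ((j+1-m : ℕ) : ℤ) = (j:ℤ) + 1 - m := by
        rw [Nat.cast_sub hm']; push_cast; ring
      push_cast [h1]; ring
    rw [pow_succ, hcast]
    ring
  have hU : ∑ m ∈ range (j+2), ((m:ℤ) * ((N+1).choose m : ℤ)) * ((-1:ℤ)^m * gg p q e (j+1-m))
      = -(((N:ℤ)+1) * SH p q N e j) := by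
    rw [Finset.sum_range_succ' (fun m => ((m:ℕ) : ℤ) * ((N+1).choose m : ℤ) * ((-1:ℤ)^m * gg p q e (j+1-m))) (j+1)]
    have key2 : ∀ m ∈ range (j+1),
        (((m+1 : ℕ)) : ℤ) * ((N+1).choose (m+1) : ℤ) * ((-1:ℤ)^(m+1) * gg p q e (j+1-(m+1)))
          = -(((N:ℤ)+1) * ((-1:ℤ)^m * (N.choose m : ℤ) * gg p q e (j-m))) := by
      intro m hm
      have hms : j+1-(m+1) = j - m := by omega
      have hch : ((N:ℤ)+1) * (N.choose m : ℤ) = (((N+1).choose (m+1)) : ℤ) * ((m:ℤ)+1) := by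
        have h2 : ((N+1) * N.choose m : ℕ) = ((N+1).choose (m+1)) * (m+1) := by
          simpa [Nat.succ_eq_add_one] using Nat.add_one_mul_choose_eq N m
        exact_mod_cast congrArg (Nat.cast : ℕ → ℤ) h2
      rw [hms, pow_succ]
      push_cast
      linear_combination ((-1:ℤ)^m * gg p q e (j-m)) * hch
    rw [Finset.sum_congr rfl key2]
    unfold SH
    rw [Finset.mul_sum, ← Finset.sum_neg_distrib]
    simp
  have hL : SH p q (N+1) (e+1) (j+1) = ∑ m ∈ range (j+2), (-1:ℤ)^m * ((N+1).choose m : ℤ) * gg p q (e+1) (j+1-m) := rfl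
  have hR : SH p q (N+1) e (j+1) = ∑ m ∈ range (j+2), (-1:ℤ)^m * ((N+1).choose m : ℤ) * gg p q e (j+1-m) := rfl
  rw [hL, hR, Finset.sum_congr rfl key, Finset.sum_sub_distrib, ← Finset.mul_sum, hU]
  ring

/-! ### Vandermonde-type vanishing -/

def svd (A B j : ℕ) : ℤ :=
  ∑ m ∈ range (j+1), (-1:ℤ)^m * (A.choose m : ℤ) * ((B + (j-m)).choose (j-m) : ℤ)

lemma svd_A_succ (A B j : ℕ) : svd (A+1) B (j+1) = svd A B (j+1) - svd A B j := by
  unfold svd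
  exact alt_sum_pascal (fun k => ((B + k).choose k : ℤ)) A j

lemma svd_B_succ (A B j : ℕ) :
    svd A (B+1) (j+1) = svd A (B+1) j + svd A B (j+1) := by
  unfold svd
  rw [Finset.sum_range_succ
    (fun m => (-1:ℤ)^m * (A.choose m : ℤ) * (((B+1) + (j+1-m)).choose (j+1-m) : ℤ)) (j+1)]
  rw [Finset.sum_range_succ
    (fun m => (-1:ℤ)^m * (A.choose m : ℤ) * ((B + (j+1-m)).choose (j+1-m) : ℤ)) (j+1)]
  have key : ∀ m ∈ range (j+1),
      (-1:ℤ)^m * (A.choose m : ℤ) * (((B+1) + (j+1-m)).choose (j+1-m) : ℤ)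
        = (-1:ℤ)^m * (A.choose m : ℤ) * (((B+1) + (j-m)).choose (j-m) : ℤ)
          + (-1:ℤ)^m * (A.choose m : ℤ) * ((B + (j+1-m)).choose (j+1-m) : ℤ) := by
    intro m hm
    have hm' : m ≤ j := by have := Finset.mem_range.mp hm; omega
    have h1 : j + 1 - m = (j - m) + 1 := by omega
    rw [h1]
    have h2 : (B+1) + ((j-m) + 1) = (B + 1 + (j-m)) + 1 := by omega
    have h3 : B + ((j-m)+1) = B + 1 + (j - m) := by omega
    rw [h2, h3, Nat.choose_succ_succ]
    push_cast
    ring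
  rw [Finset.sum_congr rfl key, Finset.sum_add_distrib]
  simp only [Nat.sub_self, Nat.add_zero, Nat.choose_zero_right]
  ring

lemma svd_zero (A B : ℕ) : svd A B 0 = 1 := by
  unfold svd
  simp

lemma svd_diag (A : ℕ) : ∀ j, svd A A j = 1 := by
  induction A with
  | zero =>
    intro j
    unfold svd
    rw [Finset.sum_eq_single 0]
    · simp
    · intro m hm hm0
      have : 0 < m := Nat.pos_of_ne_zero hm0
      simp [Nat.choose_eq_zero_of_lt this]
    · intro h
      simp at h
  | succ A ih =>
    intro j
    cases j with
    | zero => exact svd_zero _ _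
    | succ j =>
      rw [svd_A_succ, svd_B_succ]
      rw [ih (j+1)]
      ring

lemma svd_vand (A j : ℕ) : svd (A+1) A (j+1) = 0 := by
  rw [svd_A_succ, svd_diag, svd_diag]
  ring

lemma SH_e_zero (p q N j : ℕ) : SH p q N 0 j = svd N (p+q+1) j := by
  unfold SH svd gg
  refine Finset.sum_congr rfl fun m hm => ?_
  have h : p + q + (j-m) + 1 = (p+q+1) + (j-m) := by omega
  rw [h]
  simp

lemma SH_vanish (p q : ℕ) : ∀ e j, e < j → SH p q (e+p+q+2) e j = 0 := by
  intro e
  induction e with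
  | zero =>
    intro j hj
    obtain ⟨j', rfl⟩ : ∃ j', j = j'+1 := ⟨j-1, by omega⟩
    rw [SH_e_zero]
    have h : 0+p+q+2 = (p+q+1)+1 := by omega
    rw [h]
    exact svd_vand _ _
  | succ e ih =>
    intro j hj
    obtain ⟨j', rfl⟩ : ∃ j', j = j'+1 := ⟨j-1, by omega⟩
    have hj' : e < j' := by omega
    rw [show e+1+p+q+2 = (e+p+q+2)+1 from by omega, SH_step p q (e+p+q+2) e j',
      SH_N_succ p q (e+p+q+2) e j', ih j' hj', ih (j'+1) (by omega)]
    simp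

lemma SH_diag (p q : ℕ) : ∀ j, SH p q (j+p+q+2) j j = ((p:ℤ)+1)^j := by
  intro j
  induction j with
  | zero =>
    unfold SH gg
    simp
  | succ j ih =>
    rw [show j+1+p+q+2 = (j+p+q+2)+1 from by omega, SH_step p q (j+p+q+2) j j,
      SH_N_succ p q (j+p+q+2) j j, ih, SH_vanish p q j (j+1) (by omega)]
    push_cast
    ring

lemma euler_eq_SH (p q : ℕ) : ∀ j i, (eulerA p q i j : ℤ) = SH p q (i+j+p+q+2) (i+j) j := by
  intro j
  induction j with
  | zero =>
    intro i
    rw [eulerA_j0]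
    unfold SH gg
    simp
  | succ j ihj =>
    intro i
    induction i with
    | zero =>
      rw [eulerA_i0]
      rw [show 0+(j+1)+p+q+2 = (j+1)+p+q+2 from by omega, show 0+(j+1) = j+1 from by omega,
        SH_diag p q (j+1)]
      push_cast
      ring
    | succ i ihi =>
      rw [eulerA_rec]
      push_cast
      rw [ihj (i+1), ihi]
      rw [show i+1+(j+1)+p+q+2 = (i+j+p+q+3)+1 from by omega,
        show i+1+(j+1) = (i+j+1)+1 from by omega,
        SH_step p q (i+j+p+q+3) (i+j+1) j,
        show i+j+p+q+3+1 = (i+j+p+q+2)+1+1 from by omega]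
      rw [SH_N_succ p q ((i+j+p+q+2)+1) (i+j+1) j]
      rw [show i+(j+1)+p+q+2 = (i+j+p+q+2)+1 from by omega,
        show i+(j+1) = i+j+1 from by omega,
        show i+1+j+p+q+2 = (i+j+p+q+2)+1 from by omega,
        show i+1+j = i+j+1 from by omega]
      push_cast
      ring

/-! ### Monotonicity inequalities -/

section Mono
variable (P q : ℕ)

-- D i j : ratio in j direction grows fast enough
-- M i j : ratio nonincreasing in i

lemma lemM_of_D (i : ℕ) (hD : ∀ j, (i+P+3) * eulerA (P+1) q i j * eulerA P q i (j+1)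
      ≤ (i+P+2) * eulerA (P+1) q i (j+1) * eulerA P q i j) :
    ∀ j, eulerA (P+1) q (i+1) j * eulerA P q i j ≤ eulerA (P+1) q i j * eulerA P q (i+1) j := by
  intro j
  induction j with
  | zero =>
    rw [eulerA_j0, eulerA_j0, eulerA_j0, eulerA_j0]
    apply le_of_eq
    ring
  | succ j ih =>
    -- G : (i+P+3) * A(i+1,j) * B(i,j+1) ≤ (i+P+2) * A(i,j+1) * B(i+1,j)
    have hG : (i+P+3) * eulerA (P+1) q (i+1) j * eulerA P q i (j+1)
        ≤ (i+P+2) * eulerA (P+1) q i (j+1) * eulerA P q (i+1) j := by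
      have hprod := Nat.mul_le_mul ih (hD j)
      have hpos : 0 < eulerA (P+1) q i j * eulerA P q i j :=
        Nat.mul_pos (eulerA_pos _ _ _ _) (eulerA_pos _ _ _ _)
      refine Nat.le_of_mul_le_mul_right ?_ hpos
      calc (i+P+3) * eulerA (P+1) q (i+1) j * eulerA P q i (j+1)
            * (eulerA (P+1) q i j * eulerA P q i j)
          = eulerA (P+1) q (i+1) j * eulerA P q i j
            * ((i+P+3) * eulerA (P+1) q i j * eulerA P q i (j+1)) := by ring
        _ ≤ eulerA (P+1) q i j * eulerA P q (i+1) j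
            * ((i+P+2) * eulerA (P+1) q i (j+1) * eulerA P q i j) := hprod
        _ = (i+P+2) * eulerA (P+1) q i (j+1) * eulerA P q (i+1) j
            * (eulerA (P+1) q i j * eulerA P q i j) := by ring
    rw [eulerA_rec, eulerA_rec]
    calc ((j+1+q+1) * eulerA (P+1) q i (j+1) + (i+1+(P+1)+1) * eulerA (P+1) q (i+1) j)
          * eulerA P q i (j+1)
        = (j+1+q+1) * (eulerA (P+1) q i (j+1) * eulerA P q i (j+1))
          + ((i+P+3) * eulerA (P+1) q (i+1) j * eulerA P q i (j+1)) := by ring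
      _ ≤ (j+1+q+1) * (eulerA (P+1) q i (j+1) * eulerA P q i (j+1))
          + ((i+P+2) * eulerA (P+1) q i (j+1) * eulerA P q (i+1) j) :=
          Nat.add_le_add_left hG _
      _ = eulerA (P+1) q i (j+1)
          * ((j+1+q+1) * eulerA P q i (j+1) + (i+1+P+1) * eulerA P q (i+1) j) := by ring

lemma lemD : ∀ i j, (i+P+3) * eulerA (P+1) q i j * eulerA P q i (j+1)
    ≤ (i+P+2) * eulerA (P+1) q i (j+1) * eulerA P q i j := by
  intro i
  induction i with
  | zero =>
    intro j
    rw [show eulerA (P+1) q 0 j = (P+2)^j from by cases j <;> simp [eulerA],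
      show eulerA (P+1) q 0 (j+1) = (P+2)^(j+1) from by simp [eulerA],
      show eulerA P q 0 j = (P+1)^j from by cases j <;> simp [eulerA],
      show eulerA P q 0 (j+1) = (P+1)^(j+1) from by simp [eulerA]]
    calc (0+P+3) * (P+2)^j * (P+1)^(j+1)
        = ((P+3)*(P+1)) * ((P+2)^j * (P+1)^j) := by ring
      _ ≤ ((P+2)*(P+2)) * ((P+2)^j * (P+1)^j) := by
          apply Nat.mul_le_mul_right
          nlinarith
      _ = (0+P+2) * (P+2)^(j+1) * (P+1)^j := by ring
  | succ i ih =>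
    intro j
    have hM := lemM_of_D P q i ih
    have hG : (i+P+3) * eulerA (P+1) q (i+1) j * eulerA P q i (j+1)
        ≤ (i+P+2) * eulerA (P+1) q i (j+1) * eulerA P q (i+1) j := by
      have hprod := Nat.mul_le_mul (hM j) (ih j)
      have hpos : 0 < eulerA (P+1) q i j * eulerA P q i j :=
        Nat.mul_pos (eulerA_pos _ _ _ _) (eulerA_pos _ _ _ _)
      refine Nat.le_of_mul_le_mul_right ?_ hpos
      calc (i+P+3) * eulerA (P+1) q (i+1) j * eulerA P q i (j+1)
            * (eulerA (P+1) q i j * eulerA P q i j)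
          = eulerA (P+1) q (i+1) j * eulerA P q i j
            * ((i+P+3) * eulerA (P+1) q i j * eulerA P q i (j+1)) := by ring
        _ ≤ eulerA (P+1) q i j * eulerA P q (i+1) j
            * ((i+P+2) * eulerA (P+1) q i (j+1) * eulerA P q i j) := hprod
        _ = (i+P+2) * eulerA (P+1) q i (j+1) * eulerA P q (i+1) j
            * (eulerA (P+1) q i j * eulerA P q i j) := by ring
    -- F : (i+P+4) * A(i+1,j) * B(i,j+1) ≤ (i+P+3) * A(i,j+1) * B(i+1,j)
    have hF : (i+P+4) * eulerA (P+1) q (i+1) j * eulerA P q i (j+1)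
        ≤ (i+P+3) * eulerA (P+1) q i (j+1) * eulerA P q (i+1) j := by
      have hpos : 0 < i+P+3 := by omega
      refine Nat.le_of_mul_le_mul_left ?_ hpos
      calc (i+P+3) * ((i+P+4) * eulerA (P+1) q (i+1) j * eulerA P q i (j+1))
          = (i+P+4) * ((i+P+3) * eulerA (P+1) q (i+1) j * eulerA P q i (j+1)) := by ring
        _ ≤ (i+P+4) * ((i+P+2) * eulerA (P+1) q i (j+1) * eulerA P q (i+1) j) :=
            Nat.mul_le_mul_left _ hG
        _ = ((i+P+4) * (i+P+2)) * (eulerA (P+1) q i (j+1) * eulerA P q (i+1) j) := by ring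
        _ ≤ ((i+P+3) * (i+P+3)) * (eulerA (P+1) q i (j+1) * eulerA P q (i+1) j) := by
            apply Nat.mul_le_mul_right
            nlinarith
        _ = (i+P+3) * ((i+P+3) * eulerA (P+1) q i (j+1) * eulerA P q (i+1) j) := by ring
    rw [eulerA_rec, eulerA_rec]
    calc (i+1+P+3) * eulerA (P+1) q (i+1) j
          * ((j+1+q+1) * eulerA P q i (j+1) + (i+1+P+1) * eulerA P q (i+1) j)
        = (j+1+q+1) * ((i+P+4) * eulerA (P+1) q (i+1) j * eulerA P q i (j+1))
          + ((i+P+4)*(i+P+2)) * (eulerA (P+1) q (i+1) j * eulerA P q (i+1) j) := by ring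
      _ ≤ (j+1+q+1) * ((i+P+3) * eulerA (P+1) q i (j+1) * eulerA P q (i+1) j)
          + ((i+P+3)*(i+P+3)) * (eulerA (P+1) q (i+1) j * eulerA P q (i+1) j) := by
          apply Nat.add_le_add
          · exact Nat.mul_le_mul_left _ hF
          · apply Nat.mul_le_mul_right
            nlinarith
      _ = (i+1+P+2) * ((j+1+q+1) * eulerA (P+1) q i (j+1) + (i+1+(P+1)+1) * eulerA (P+1) q (i+1) j)
          * eulerA P q (i+1) j := by ring

lemma lemM : ∀ i j, eulerA (P+1) q (i+1) j * eulerA P q i j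
    ≤ eulerA (P+1) q i j * eulerA P q (i+1) j :=
  fun i => lemM_of_D P q i (lemD P q i)

end Mono

/-! ### The limit -/

open Filter

lemma euler_tendsto (p q j : ℕ) :
    Tendsto (fun i : ℕ => (eulerA p q i j : ℝ) / ((j:ℝ)+q+1)^(i+j)) atTop
      (nhds (((p+q+j+1).choose j : ℝ))) := by
  have hb : (0:ℝ) < (j:ℝ)+q+1 := by positivity
  have hfa : ∀ i : ℕ, (eulerA p q i j : ℝ) / ((j:ℝ)+q+1)^(i+j)
      = ∑ m ∈ range (j+1),
          ((-1:ℝ)^m * (((i+j+p+q+2).choose m : ℕ) : ℝ) * (((p+q+(j-m)+1).choose (j-m) : ℕ) : ℝ))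
            * (((((j-m) + q + 1 : ℕ)) : ℝ)/((j:ℝ)+q+1))^(i+j) := by
    intro i
    have hcf := euler_eq_SH p q j i
    have h1 : (eulerA p q i j : ℝ) = ((SH p q (i+j+p+q+2) (i+j) j : ℤ) : ℝ) := by
      exact_mod_cast congrArg (fun z : ℤ => (z : ℝ)) hcf
    rw [h1]
    unfold SH gg
    push_cast
    rw [Finset.sum_div]
    refine Finset.sum_congr rfl fun m hm => ?_
    rw [div_pow]
    ring
  have hkey : ∀ m ∈ range (j+1), Tendsto
      (fun i : ℕ => ((-1:ℝ)^m * (((i+j+p+q+2).choose m : ℕ) : ℝ) * (((p+q+(j-m)+1).choose (j-m) : ℕ) : ℝ))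
            * (((((j-m) + q + 1 : ℕ)) : ℝ)/((j:ℝ)+q+1))^(i+j))
      atTop (nhds (if m = 0 then (((p+q+j+1).choose j : ℕ) : ℝ) else 0)) := by
    intro m hm
    rcases Nat.eq_zero_or_pos m with rfl | hm1
    · simp only [if_pos rfl]
      have hx : ((((j-0) + q + 1 : ℕ)) : ℝ)/((j:ℝ)+q+1) = 1 := by
        rw [Nat.sub_zero]
        rw [div_eq_one_iff_eq hb.ne']
        push_cast; ring
      simp only [hx, one_pow, pow_zero, Nat.choose_zero_right, Nat.cast_one, one_mul, mul_one]
      have harg : ∀ i : ℕ, p+q+(j-0)+1 = p+q+j+1 := by intro i; omega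
      simp only [Nat.sub_zero]
      have : p+q+j+1 = p+q+j+1 := rfl
      exact tendsto_const_nhds
    · simp only [if_neg (by omega : ¬ m = 0)]
      have hmj : m ≤ j := by have := Finset.mem_range.mp hm; omega
      set x : ℝ := ((((j-m) + q + 1 : ℕ)) : ℝ)/((j:ℝ)+q+1) with hxdef
      have hx0 : 0 < x := by
        apply div_pos _ hb
        positivity
      have hx1 : x < 1 := by
        rw [hxdef, div_lt_one hb]
        have : (j-m) + q + 1 ≤ j + q := by omega
        calc ((((j-m) + q + 1 : ℕ)) : ℝ) ≤ ((j + q : ℕ) : ℝ) := by exact_mod_cast this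
          _ < (j:ℝ)+q+1 := by push_cast; linarith
      set c : ℝ := (((p+q+(j-m)+1).choose (j-m) : ℕ) : ℝ) with hcdef
      have hc0 : 0 ≤ c := by positivity
      set K : ℝ := c * (x⁻¹)^(p+q+2) with hKdef
      have hlim : Tendsto (fun i : ℕ => K * (((i + (j+p+q+2) : ℕ) : ℝ)^m * x^(i + (j+p+q+2)))) atTop (nhds 0) := by
        have h0 : Tendsto (fun n : ℕ => ((n:ℕ) : ℝ)^m * x^n) atTop (nhds 0) :=
          tendsto_pow_const_mul_const_pow_of_lt_one m hx0.le hx1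
        have h1 : Tendsto (fun i : ℕ => ((i + (j+p+q+2) : ℕ) : ℝ)^m * x^(i + (j+p+q+2))) atTop (nhds 0) :=
          h0.comp (tendsto_add_atTop_nat (j+p+q+2))
        simpa using h1.const_mul K
      apply squeeze_zero_norm _ hlim
      intro i
      have hch : (((i+j+p+q+2).choose m : ℕ) : ℝ) ≤ (((i+j+p+q+2 : ℕ)) : ℝ)^m := by
        exact_mod_cast Nat.choose_le_pow (i+j+p+q+2) m
      have hxpow : (0:ℝ) < x^(i+j) := pow_pos hx0 _
      have heq : K * (((i + (j+p+q+2) : ℕ) : ℝ)^m * x^(i + (j+p+q+2)))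
          = c * ((((i+j+p+q+2 : ℕ)) : ℝ)^m * x^(i+j)) := by
        have harg : i + (j+p+q+2) = i+j+p+q+2 := by omega
        rw [harg, hKdef]
        have : x^(i+j+p+q+2) = x^(i+j) * x^(p+q+2) := by
          rw [← pow_add, show i+j+(p+q+2) = i+j+p+q+2 from by omega]
        rw [this]
        have hxx : x⁻¹^(p+q+2) * x^(p+q+2) = 1 := by
          rw [← mul_pow, inv_mul_cancel₀ hx0.ne', one_pow]
        linear_combination (c * (((i+j+p+q+2 : ℕ)) : ℝ)^m * x^(i+j)) * hxx
      rw [heq]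
      have hnorm : ‖((-1:ℝ)^m * (((i+j+p+q+2).choose m : ℕ) : ℝ) * c) * x^(i+j)‖
          = (((i+j+p+q+2).choose m : ℕ) : ℝ) * c * x^(i+j) := by
        rw [norm_mul, norm_mul, norm_mul]
        simp [abs_of_nonneg hc0, abs_of_nonneg hxpow.le, abs_of_nonneg (le_of_lt hx0)]
      rw [hnorm]
      have := mul_le_mul_of_nonneg_right hch (mul_nonneg hc0 hxpow.le)
      calc (((i+j+p+q+2).choose m : ℕ) : ℝ) * c * x^(i+j)
          = (((i+j+p+q+2).choose m : ℕ) : ℝ) * (c * x^(i+j)) := by ring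
        _ ≤ (((i+j+p+q+2 : ℕ)) : ℝ)^m * (c * x^(i+j)) := this
        _ = c * ((((i+j+p+q+2 : ℕ)) : ℝ)^m * x^(i+j)) := by ring
  have hsum := tendsto_finset_sum (range (j+1)) hkey
  have hfin : ∑ m ∈ range (j+1), (if m = 0 then (((p+q+j+1).choose j : ℕ) : ℝ) else 0)
      = (((p+q+j+1).choose j : ℕ) : ℝ) := by
    rw [Finset.sum_ite_eq' (range (j+1)) 0 (fun _ => (((p+q+j+1).choose j : ℕ) : ℝ))]
    simp
  rw [hfin] at hsum
  have hfeq : (fun i : ℕ => (eulerA p q i j : ℝ) / ((j:ℝ)+q+1)^(i+j))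
      = fun i : ℕ => ∑ m ∈ range (j+1),
          ((-1:ℝ)^m * (((i+j+p+q+2).choose m : ℕ) : ℝ) * (((p+q+(j-m)+1).choose (j-m) : ℕ) : ℝ))
            * (((((j-m) + q + 1 : ℕ)) : ℝ)/((j:ℝ)+q+1))^(i+j) := funext hfa
  rw [hfeq]
  exact hsum

theorem stmt8 (p q j : ℕ) (hp : 1 ≤ p) :
    Antitone (fun i : ℕ => (eulerA p q i j : ℝ) / (eulerA (p - 1) q i j)) ∧
      Filter.Tendsto (fun i : ℕ => (eulerA p q i j : ℝ) / (eulerA (p - 1) q i j))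
        Filter.atTop (nhds (((p : ℝ) + q + j + 1) / ((p : ℝ) + q + 1))) := by
  obtain ⟨P, rfl⟩ : ∃ P, p = P + 1 := ⟨p-1, by omega⟩
  simp only [Nat.add_sub_cancel]
  constructor
  · apply antitone_nat_of_succ_le
    intro i
    have hM := lemM P q i j
    have hB0 : (0:ℝ) < (eulerA P q i j : ℝ) := by exact_mod_cast eulerA_pos P q i j
    have hB1 : (0:ℝ) < (eulerA P q (i+1) j : ℝ) := by exact_mod_cast eulerA_pos P q (i+1) j
    rw [div_le_div_iff₀ hB1 hB0]
    exact_mod_cast hM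
  · have hA := euler_tendsto (P+1) q j
    have hB := euler_tendsto P q j
    have hBpos : (0:ℝ) < (((P+q+j+1).choose j : ℕ) : ℝ) := by
      have : 0 < (P+q+j+1).choose j := Nat.choose_pos (by omega)
      exact_mod_cast this
    have hApos : (0:ℝ) < (((P+1+q+j+1).choose j : ℕ) : ℝ) := by
      have : 0 < (P+1+q+j+1).choose j := Nat.choose_pos (by omega)
      exact_mod_cast this
    have hdiv := hA.div hB hBpos.ne'
    have hfe : (fun i : ℕ => (eulerA (P+1) q i j : ℝ) / (eulerA P q i j))
        = fun i : ℕ => ((eulerA (P+1) q i j : ℝ)/((j:ℝ)+q+1)^(i+j))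
            / ((eulerA P q i j : ℝ)/((j:ℝ)+q+1)^(i+j)) := by
      funext i
      have hρ : ((j:ℝ)+q+1)^(i+j) ≠ 0 := by positivity
      have hbne : (eulerA P q i j : ℝ) ≠ 0 := by
        have : (0:ℝ) < (eulerA P q i j : ℝ) := by exact_mod_cast eulerA_pos P q i j
        exact this.ne'
      rw [div_div_div_cancel_right₀]
      exact hρ
    have hval : (((P+1+q+j+1).choose j : ℕ) : ℝ) / (((P+q+j+1).choose j : ℕ) : ℝ)
        = (((P+1:ℕ) : ℝ) + q + j + 1) / (((P+1:ℕ) : ℝ) + q + 1) := by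
      have hd2 : (0:ℝ) < ((P+1:ℕ) : ℝ) + q + 1 := by positivity
      rw [div_eq_div_iff hBpos.ne' hd2.ne']
      have hn := Nat.choose_mul_succ_eq (P+q+j+1) j
      -- (P+q+j+1).choose j * (P+q+j+2) = (P+q+j+2).choose j * (P+q+j+2-j)
      have hn2 : (P+q+j+1).choose j * (P+q+j+2) = (P+1+q+j+1).choose j * (P+q+2) := by
        have h4 : P+q+j+1+1-j = P+q+2 := by omega
        rw [h4] at hn
        rw [show P+q+j+2 = P+q+j+1+1 from by omega,
          show P+1+q+j+1 = P+q+j+1+1 from by omega]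
        exact hn
      have hn3 : ((P+q+j+1).choose j : ℝ) * ((P:ℝ)+q+j+2) = ((P+1+q+j+1).choose j : ℝ) * ((P:ℝ)+q+2) := by
        exact_mod_cast hn2
      push_cast
      push_cast at hn3
      linarith [hn3]
    rw [hfe]
    rw [hval] at hdiv
    convert hdiv using 2
    rfl
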